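/- Let M be a traceless 2×2 complex matrix such that Mᵀ belongs to the Lie algebra of the stabilizer of a normal N (i.e., M = −(η_N⁻¹)ᵀ M† η_Nᵀ, where η_N is the hermitian matrix of the unit vector N with det η_N = ±1). Then the eigenvalues of M are either both real or both purely imaginary. -/

import Mathlib

open Matrix

/-- The hermitian matrix `η_N = Nᵘσᵤ` associated to a vector of Minkowski space. -/
noncomputable def etaN (N : Fin 4 → ℝ) : Matrix (Fin 2) (Fin 2) ℂ :=
  !![(N 0 : ℂ) + (N 3 : ℂ), (N 1 : ℂ) - Complex.I * (N 2 : ℂ);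
     (N 1 : ℂ) + Complex.I * (N 2 : ℂ), (N 0 : ℂ) - (N 3 : ℂ)]

/-- The Minkowski scalar product in signature `(+,−,−,−)`. -/
noncomputable def mink (N M : Fin 4 → ℝ) : ℝ :=
  N 0 * M 0 - N 1 * M 1 - N 2 * M 2 - N 3 * M 3

lemma det_etaN (N : Fin 4 → ℝ) : (etaN N).det = (mink N N : ℂ) := by
  simp [etaN, mink, Matrix.det_fin_two_of]
  ring_nf
  simp [Complex.I_sq]
  ring

theorem stmt_19 (N : Fin 4 → ℝ) (hN : mink N N = 1 ∨ mink N N = -1)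
    (M : Matrix (Fin 2) (Fin 2) ℂ) (htr : Matrix.trace M = 0)
    (hM : M = -(((etaN N)⁻¹)ᵀ * Mᴴ * (etaN N)ᵀ)) :
    (∀ μ ∈ spectrum ℂ M, μ.im = 0) ∨ (∀ μ ∈ spectrum ℂ M, μ.re = 0) := by
  have hdη : IsUnit (etaN N).det := by
    rw [det_etaN]
    rcases hN with h | h <;> simp [h]
  have hdet : M.det = starRingEnd ℂ M.det := by
    conv_lhs => rw [hM]
    rw [det_neg, det_mul, det_mul, det_transpose, det_transpose, det_conjTranspose,
      det_nonsing_inv]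
    simp only [Ring.inverse_eq_inv]
    field_simp
    rw [mul_div_right_comm, mul_div_assoc, div_self hdη.ne_zero]
    norm_num [Complex.star_def]
  -- so det M is real
  have hdre : M.det = ((M.det.re : ℝ) : ℂ) := by
    have := Complex.conj_eq_iff_re.mp hdet.symm
    exact this.symm
  -- each μ in spectrum satisfies μ^2 = -det M
  have hsq : ∀ μ ∈ spectrum ℂ M, μ ^ 2 = -M.det := by
    intro μ hμ
    rw [spectrum.mem_iff] at hμ
    rw [Matrix.isUnit_iff_isUnit_det, isUnit_iff_ne_zero, not_not] at hμ
    have htr' : M 0 0 + M 1 1 = 0 := by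
      simpa [Matrix.trace, Fin.sum_univ_two] using htr
    have : (algebraMap ℂ (Matrix (Fin 2) (Fin 2) ℂ)) μ - M = 
        !![μ - M 0 0, -M 0 1; -M 1 0, μ - M 1 1] := by
      ext i j
      fin_cases i <;> fin_cases j <;>
        simp [Matrix.algebraMap_eq_diagonal, Matrix.diagonal]
    rw [this, Matrix.det_fin_two_of] at hμ
    have hd : M.det = M 0 0 * M 1 1 - M 0 1 * M 1 0 := by rw [Matrix.det_fin_two]
    have h11 : M 1 1 = -M 0 0 := by linear_combination htr'
    rw [hd, h11]
    rw [h11] at hμ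
    ring_nf
    ring_nf at hμ
    linear_combination hμ
  set r := M.det.re with hr
  rcases le_or_gt r 0 with h | h
  · left
    intro μ hμ
    have h2 := hsq μ hμ
    rw [hdre] at h2
    have him : (μ ^ 2).im = 0 := by rw [h2]; simp
    have hre : (μ ^ 2).re = -r := by rw [h2]; simp
    simp [pow_two, Complex.mul_im, Complex.mul_re] at him hre
    rcases mul_eq_zero.mp (by linarith : μ.re * μ.im = 0) with h0 | h0
    · nlinarith [mul_self_nonneg μ.im]
    · exact h0
  · right
    intro μ hμ
    have h2 := hsq μ hμ
    rw [hdre] at h2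
    have him : (μ ^ 2).im = 0 := by rw [h2]; simp
    have hre : (μ ^ 2).re = -r := by rw [h2]; simp
    simp [pow_two, Complex.mul_im, Complex.mul_re] at him hre
    rcases mul_eq_zero.mp (by linarith : μ.re * μ.im = 0) with h0 | h0
    · exact h0
    · nlinarith [mul_self_nonneg μ.re]
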